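/- Let T, Ĉ be real numbers with T > 1, 0 < Ĉ < 1 and TĈ < 1, set A = (1 − Ĉ)/(ĈT − Ĉ) and L₉(θ) = TĈ − Ĉ + (1 − TĈ)·cos²θ. Define, for θ ∈ (0, π/2), Y₂(θ) = [(√(tan²θ + A) + √A)/(√(tan²θ + A) − √A)]^{(1/2)√(1−Ĉ)}. Then Y₂ is positive and differentiable on (0, π/2) and satisfies (log Y₂)'(θ) = −(1 − Ĉ)/(√(L₉(θ))·sin θ) for all θ ∈ (0, π/2). -/

import Mathlib

open Real Set

/-- The integration producing Formula (5.23): the explicit function `Y₂`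
solves `(log Y₂)' = −(1 − Ĉ)/(√L₉·sin θ)` on `(0, π/2)`. -/
theorem stmt_11
    (T C : ℝ) (hT : 1 < T) (hC0 : 0 < C) (hC1 : C < 1) (hTC : T * C < 1)
    (A : ℝ) (hA : A = (1 - C) / (C * T - C))
    (L₉ : ℝ → ℝ)
    (hL₉ : ∀ θ : ℝ, L₉ θ = T * C - C + (1 - T * C) * (Real.cos θ) ^ 2)
    (Y₂ : ℝ → ℝ)
    (hY₂ : ∀ θ ∈ Ioo (0:ℝ) (π / 2),
      Y₂ θ =
        ((Real.sqrt ((Real.tan θ) ^ 2 + A) + Real.sqrt A)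
          / (Real.sqrt ((Real.tan θ) ^ 2 + A) - Real.sqrt A))
        ^ ((1 / 2) * Real.sqrt (1 - C))) :
    (∀ θ ∈ Ioo (0:ℝ) (π / 2), 0 < Y₂ θ) ∧
    (∀ θ ∈ Ioo (0:ℝ) (π / 2), DifferentiableAt ℝ Y₂ θ) ∧
    (∀ θ ∈ Ioo (0:ℝ) (π / 2),
      deriv (fun x => Real.log (Y₂ x)) θ
        = -(1 - C) / (Real.sqrt (L₉ θ) * Real.sin θ)) := by
  have hCT : 0 < C * T - C := by nlinarith
  have h1C : 0 < 1 - C := by linarith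
  have hA0 : 0 < A := hA ▸ div_pos h1C hCT
  -- pointwise facts on the interval
  have fact : ∀ x ∈ Ioo (0:ℝ) (π/2), 0 < Real.cos x ∧ 0 < Real.sin x ∧ 0 < Real.tan x ∧
      Real.sqrt A < Real.sqrt ((Real.tan x)^2 + A) := by
    intro x hx
    obtain ⟨hx0, hx2⟩ := hx
    have hc : 0 < Real.cos x := Real.cos_pos_of_mem_Ioo ⟨by linarith [Real.pi_pos], hx2⟩
    have hs : 0 < Real.sin x := Real.sin_pos_of_pos_of_lt_pi hx0 (by linarith [Real.pi_pos])
    have ht : 0 < Real.tan x := Real.tan_pos_of_pos_of_lt_pi_div_two hx0 hx2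
    exact ⟨hc, hs, ht, Real.sqrt_lt_sqrt hA0.le (by nlinarith)⟩
  have hbase : ∀ x ∈ Ioo (0:ℝ) (π/2),
      1 < (Real.sqrt ((Real.tan x)^2 + A) + Real.sqrt A)
          / (Real.sqrt ((Real.tan x)^2 + A) - Real.sqrt A) := by
    intro x hx
    obtain ⟨-, -, -, hu⟩ := fact x hx
    have ha0 : 0 < Real.sqrt A := Real.sqrt_pos.mpr hA0
    rw [one_lt_div (by linarith)]
    linarith
  refine ⟨?_, ?_, ?_⟩
  · intro θ hθ
    rw [hY₂ θ hθ]
    exact Real.rpow_pos_of_pos (by linarith [hbase θ hθ]) _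
  · intro θ hθ
    have hev : Y₂ =ᶠ[nhds θ] fun x =>
        ((Real.sqrt ((Real.tan x)^2 + A) + Real.sqrt A)
          / (Real.sqrt ((Real.tan x)^2 + A) - Real.sqrt A)) ^ ((1/2) * Real.sqrt (1 - C)) := by
      filter_upwards [isOpen_Ioo.mem_nhds hθ] with x hx using hY₂ x hx
    obtain ⟨hc, hs, ht, hu⟩ := fact θ hθ
    have hne : (Real.tan θ)^2 + A ≠ 0 := by positivity
    have hden : Real.sqrt ((Real.tan θ)^2 + A) - Real.sqrt A ≠ 0 := by
      have ha0 : (0:ℝ) ≤ Real.sqrt A := Real.sqrt_nonneg A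
      intro h; linarith [sub_eq_zero.mp h ▸ hu]
    have hdtan : DifferentiableAt ℝ Real.tan θ := (Real.hasDerivAt_tan hc.ne').differentiableAt
    have hd1 : DifferentiableAt ℝ (fun x => Real.sqrt ((Real.tan x)^2 + A)) θ :=
      (((hdtan.pow 2).add_const A).hasDerivAt.sqrt hne).differentiableAt
    refine hev.differentiableAt_iff.mpr ?_
    exact ((hd1.add_const _).div (hd1.sub_const _) hden).rpow_const
      (Or.inl (by simp only [Pi.div_apply]; linarith [hbase θ hθ]))
  · intro θ hθ
    obtain ⟨hc, hs, ht, huA⟩ := fact θ hθ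
    set t := Real.tan θ with htdef
    set u := Real.sqrt (t^2 + A) with hudef
    set a := Real.sqrt A with hadef
    have ha0 : 0 < a := Real.sqrt_pos.mpr hA0
    have hu0 : 0 < u := lt_trans ha0 huA
    have hne : t^2 + A ≠ 0 := by positivity
    have hnum : u + a ≠ 0 := by positivity
    have hden : u - a ≠ 0 := by intro h; rw [sub_eq_zero] at h; exact absurd h (ne_of_gt huA)
    set p := (1/2 : ℝ) * Real.sqrt (1 - C) with hpdef
    -- eventual equality of log ∘ Y₂ with an explicit function
    have hev : (fun x => Real.log (Y₂ x)) =ᶠ[nhds θ] fun x =>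
        p * (Real.log (Real.sqrt ((Real.tan x)^2 + A) + Real.sqrt A)
          - Real.log (Real.sqrt ((Real.tan x)^2 + A) - Real.sqrt A)) := by
      filter_upwards [isOpen_Ioo.mem_nhds hθ] with x hx
      obtain ⟨-, -, -, hux⟩ := fact x hx
      have hdx : (0:ℝ) < Real.sqrt ((Real.tan x)^2 + A) - Real.sqrt A := by
        have := Real.sqrt_nonneg A; linarith
      have hnx : (0:ℝ) < Real.sqrt ((Real.tan x)^2 + A) + Real.sqrt A := by
        have := Real.sqrt_nonneg A; linarith
      rw [hY₂ x hx, Real.log_rpow (div_pos hnx hdx), Real.log_div hnx.ne' hdx.ne']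
    rw [hev.deriv_eq]
    -- compute the derivative of the explicit function
    have h1 : HasDerivAt (fun x => (Real.tan x)^2 + A) (2 * t^1 * (1 / Real.cos θ ^ 2)) θ :=
      (((Real.hasDerivAt_tan hc.ne').pow 2).add_const A)
    set d : ℝ := 2 * t^1 * (1 / Real.cos θ ^ 2) / (2 * u) with hddef
    have h2 : HasDerivAt (fun x => Real.sqrt ((Real.tan x)^2 + A)) d θ := h1.sqrt hne
    have h3 : HasDerivAt (fun x =>
        p * (Real.log (Real.sqrt ((Real.tan x)^2 + A) + Real.sqrt A)
          - Real.log (Real.sqrt ((Real.tan x)^2 + A) - Real.sqrt A)))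
        (p * (d / (u + a) - d / (u - a))) θ :=
      (((h2.add_const a).log hnum).sub ((h2.sub_const a).log hden)).const_mul p
    rw [h3.deriv]
    -- algebra
    have hu2 : u^2 = t^2 + A := Real.sq_sqrt (by positivity)
    have ha2 : a^2 = A := Real.sq_sqrt hA0.le
    set w := Real.sqrt (C * T - C) with hwdef
    have hw0 : 0 < w := Real.sqrt_pos.mpr hCT
    have hw2 : w^2 = C * T - C := Real.sq_sqrt hCT.le
    set q := Real.sqrt (1 - C) with hqdef
    have hq0 : 0 < q := Real.sqrt_pos.mpr h1C
    have hq2 : q^2 = 1 - C := Real.sq_sqrt h1C.le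
    have haw : a * w = q := by
      rw [hadef, hwdef, ← Real.sqrt_mul hA0.le, hA]
      congr 1
      field_simp
      exact div_self (sub_ne_zero.mpr hT.ne')
    have hAC : (C * T - C) * A = 1 - C := by rw [hA]; field_simp; exact div_self (sub_ne_zero.mpr hT.ne')
    have hcs : Real.cos θ * t = Real.sin θ := by
      rw [htdef, Real.tan_eq_sin_div_cos]; field_simp
    have hs2 : Real.sin θ ^ 2 + Real.cos θ ^ 2 = 1 := Real.sin_sq_add_cos_sq θ
    have hL : Real.sqrt (L₉ θ) = w * (Real.cos θ * u) := by
      have hLval : L₉ θ = (C * T - C) * (Real.cos θ * u)^2 := by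
        rw [hL₉]
        linear_combination (-(C*T - C)*Real.cos θ^2) * hu2 - Real.cos θ^2 * hAC -
          (C*T - C)*(Real.cos θ * t + Real.sin θ) * hcs - (T*C - C) * hs2
      rw [hLval, Real.sqrt_mul hCT.le, Real.sqrt_sq (by positivity), hwdef]
    rw [hL]
    have ht0 : t ≠ 0 := ht.ne'
    have h5 : (u + a) * (u - a) = t^2 := by linear_combination hu2 - ha2
    have key : d / (u + a) - d / (u - a) = -(2 * a * d) / t^2 := by
      rw [div_sub_div _ _ hnum hden, h5]
      congr 1
      ring
    rw [key, hddef]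
    have haw2 : a * w = Real.sqrt (1 - C) := haw
    have hq22 : Real.sqrt (1 - C) ^ 2 = 1 - C := Real.sq_sqrt h1C.le
    field_simp
    linear_combination (-Real.sqrt (1-C)*Real.sin θ) * haw2 +
      (-Real.sin θ) * hq22 + (1-C) * hcs
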